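/- Let Θ : Ω → Ψ be measurable and {P_θ}_{θ∈Ψ} a disintegration of P over P_Θ consistent with Θ. Let I be countable, T countably generated, and {X_i}_{i∈I} measurable maps Ω → Y. Then {X_i}_{i∈I} is P-conditionally independent given Θ (i.e., for distinct i_1,…,i_n and E_j ∈ σ(X_{i_j}), P(E_1 ∩ … ∩ E_n | σ(Θ)) = ∏_j P(E_j | σ(Θ)) a.s.) if and only if for P_Θ-almost all θ∈Ψ the family {X_i}_{i∈I} is independent under P_θ. -/

import Mathlib

open MeasureTheory Set

/-- A family `{X_i}` of measurable maps is `P`-conditionally independent over the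
σ-algebra `F`: for finitely many distinct indices `i₁, …, iₙ` and events
`E_j ∈ σ(X_{i_j})`, `P(E₁ ∩ … ∩ Eₙ | F) = ∏ⱼ P(E_j | F)` holds `P|F`-a.s. -/
def CondIndepFam {Ω Y I : Type*} [MeasurableSpace Ω] (mY : MeasurableSpace Y)
    (P : Measure Ω) (F : MeasurableSpace Ω) (X : I → Ω → Y) : Prop :=
  ∀ (n : ℕ) (idx : Fin n → I), Function.Injective idx →
    ∀ E : Fin n → Set Ω,
      (∀ j, MeasurableSet[MeasurableSpace.comap (X (idx j)) mY] (E j)) →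
      P[Set.indicator (⋂ j, E j) (fun _ => (1 : ℝ)) | F]
        =ᵐ[P] fun ω => ∏ j, (P[Set.indicator (E j) (fun _ => (1 : ℝ)) | F]) ω

/-- The π-system generated by a countable collection is countable. -/
lemma countable_generatePiSystem {α : Type*} {S : Set (Set α)} (hS : S.Countable) :
    (generatePiSystem S).Countable := by
  classical
  haveI := hS.to_subtype
  refine Set.Countable.mono ?_ (Set.countable_range
    (fun T : Finset S => ⋂ x ∈ T, (x : Set α)))
  intro t ht
  induction ht with
  | base h => exact ⟨{⟨_, h⟩}, by simp⟩
  | inter hs ht hne ihs iht =>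
      obtain ⟨T₁, rfl⟩ := ihs
      obtain ⟨T₂, rfl⟩ := iht
      refine ⟨T₁ ∪ T₂, ?_⟩
      simp only [Finset.mem_union, Set.iInter_or, Set.iInter_inter_distrib]

section Disint

variable {Ω Ψ : Type*} [MeasurableSpace Ω] [mΨ : MeasurableSpace Ψ]
    (P : Measure Ω) [IsProbabilityMeasure P] (Θ : Ω → Ψ) (hΘ : Measurable Θ)
    (Pd : Ψ → Measure Ω) (hPdprob : ∀ θ, IsProbabilityMeasure (Pd θ))
    (hPdmeas : ∀ D : Set Ω, MeasurableSet D → Measurable fun θ => Pd θ D)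
    (hPdint : ∀ D : Set Ω, MeasurableSet D → ∫⁻ θ, Pd θ D ∂(P.map Θ) = P D)
    (hPdcons : ∀ D : Set Ψ, MeasurableSet D →
      ∀ᵐ θ ∂(P.map Θ).restrict D, Pd θ (Θ ⁻¹' D) = 1)

include hΘ hPdprob hPdint hPdcons in
lemma disint_setLIntegral {D : Set Ω} (hD : MeasurableSet D) {B : Set Ψ}
    (hB : MeasurableSet B) :
    ∫⁻ θ in B, Pd θ D ∂(P.map Θ) = P (D ∩ Θ ⁻¹' B) := by
  have hmDB : MeasurableSet (D ∩ Θ ⁻¹' B) := hD.inter (hΘ hB)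
  have h1 : ∀ᵐ θ ∂(P.map Θ).restrict B, Pd θ D = Pd θ (D ∩ Θ ⁻¹' B) := by
    filter_upwards [hPdcons B hB] with θ hθ
    haveI := hPdprob θ
    refine le_antisymm ?_ (measure_mono inter_subset_left)
    have hcompl : Pd θ (Θ ⁻¹' B)ᶜ = 0 := by
      rw [measure_compl (hΘ hB) (measure_ne_top _ _), hθ, measure_univ, tsub_self]
    calc Pd θ D ≤ Pd θ ((D ∩ Θ ⁻¹' B) ∪ (Θ ⁻¹' B)ᶜ) := by
          refine measure_mono fun x hx => ?_
          by_cases h : x ∈ Θ ⁻¹' B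
          · exact Or.inl ⟨hx, h⟩
          · exact Or.inr h
      _ ≤ Pd θ (D ∩ Θ ⁻¹' B) + Pd θ (Θ ⁻¹' B)ᶜ := measure_union_le _ _
      _ = Pd θ (D ∩ Θ ⁻¹' B) := by rw [hcompl, add_zero]
  have h2 : ∀ᵐ θ ∂(P.map Θ).restrict Bᶜ, Pd θ (D ∩ Θ ⁻¹' B) = 0 := by
    filter_upwards [hPdcons Bᶜ hB.compl] with θ hθ
    haveI := hPdprob θ
    have : Pd θ (Θ ⁻¹' B) = 0 := by
      have : Pd θ (Θ ⁻¹' Bᶜ)ᶜ = 0 := by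
        rw [measure_compl (hΘ hB.compl) (measure_ne_top _ _), hθ, measure_univ, tsub_self]
      simpa [Set.preimage_compl, compl_compl] using this
    exact measure_mono_null inter_subset_right this
  calc ∫⁻ θ in B, Pd θ D ∂(P.map Θ)
      = ∫⁻ θ in B, Pd θ (D ∩ Θ ⁻¹' B) ∂(P.map Θ) := lintegral_congr_ae h1
    _ = (∫⁻ θ in B, Pd θ (D ∩ Θ ⁻¹' B) ∂(P.map Θ))
          + ∫⁻ θ in Bᶜ, Pd θ (D ∩ Θ ⁻¹' B) ∂(P.map Θ) := by
        rw [show ∫⁻ θ in Bᶜ, Pd θ (D ∩ Θ ⁻¹' B) ∂(P.map Θ) = 0 from ?_, add_zero]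
        rw [lintegral_congr_ae h2, lintegral_zero]
    _ = ∫⁻ θ, Pd θ (D ∩ Θ ⁻¹' B) ∂(P.map Θ) := lintegral_add_compl _ hB
    _ = P (D ∩ Θ ⁻¹' B) := hPdint _ hmDB

include hΘ hPdprob hPdmeas hPdint hPdcons in
lemma disint_ae_eq_condexp {D : Set Ω} (hD : MeasurableSet D) :
    (fun ω => (Pd (Θ ω) D).toReal)
      =ᵐ[P] P[D.indicator (fun _ => (1 : ℝ)) | MeasurableSpace.comap Θ mΨ] := by
  have hmθ : Measurable fun θ => (Pd θ D).toReal := (hPdmeas D hD).ennreal_toReal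
  have hmg : Measurable[MeasurableSpace.comap Θ mΨ] fun ω => (Pd (Θ ω) D).toReal :=
    hmθ.comp (Measurable.of_comap_le le_rfl)
  have hint : Integrable (fun ω => (Pd (Θ ω) D).toReal) P := by
    refine Integrable.mono' (integrable_const (1 : ℝ))
      (hmg.mono hΘ.comap_le le_rfl).aestronglyMeasurable
      (Filter.Eventually.of_forall fun ω => ?_)
    haveI := hPdprob (Θ ω)
    rw [Real.norm_eq_abs, abs_of_nonneg ENNReal.toReal_nonneg]
    exact ENNReal.toReal_le_of_le_ofReal zero_le_one (by simpa using prob_le_one)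
  refine ae_eq_condExp_of_forall_setIntegral_eq hΘ.comap_le
    ((integrable_const _).indicator hD) (fun s _ _ => hint.integrableOn) ?_
    (Measurable.stronglyMeasurable hmg).aestronglyMeasurable
  rintro s ⟨B, hB, rfl⟩ -
  have hm2 : AEMeasurable (fun ω => Pd (Θ ω) D) P :=
    ((hPdmeas D hD).comp hΘ).aemeasurable
  rw [integral_toReal hm2.restrict
      (Filter.Eventually.of_forall fun ω => measure_lt_top _ _),
    integral_indicator_const _ hD, measureReal_restrict_apply hD, smul_eq_mul, mul_one,
    measureReal_def]
  congr 1
  rw [← setLIntegral_map hB (hPdmeas D hD) hΘ]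
  exact disint_setLIntegral P Θ hΘ Pd hPdprob hPdint hPdcons hD hB

end Disint

/-- For `I` countable and `T` countably generated, `{X_i}` is
`P`-conditionally independent given `Θ` iff it is `P_θ`-independent for
`P_Θ`-almost all `θ`. -/
theorem condIndep_iff_ae_indep
    {Ω Y Ψ I : Type*} [MeasurableSpace Ω] [mY : MeasurableSpace Y] [mΨ : MeasurableSpace Ψ]
    [MeasurableSpace.CountablyGenerated Y] [Countable I]
    (P : Measure Ω) [IsProbabilityMeasure P]
    (Θ : Ω → Ψ) (hΘ : Measurable Θ)
    (Pd : Ψ → Measure Ω) (hPdprob : ∀ θ, IsProbabilityMeasure (Pd θ))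
    (hPdmeas : ∀ D : Set Ω, MeasurableSet D → Measurable fun θ => Pd θ D)
    (hPdint : ∀ D : Set Ω, MeasurableSet D → ∫⁻ θ, Pd θ D ∂(P.map Θ) = P D)
    (hPdcons : ∀ D : Set Ψ, MeasurableSet D →
      ∀ᵐ θ ∂(P.map Θ).restrict D, Pd θ (Θ ⁻¹' D) = 1)
    (X : I → Ω → Y) (hX : ∀ i, Measurable (X i)) :
    CondIndepFam mY P (MeasurableSpace.comap Θ mΨ) X ↔
      ∀ᵐ θ ∂(P.map Θ), ProbabilityTheory.iIndepFun X (Pd θ) := by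
  classical
  have key : ∀ {D : Set Ω}, MeasurableSet D →
      (fun ω => (Pd (Θ ω) D).toReal)
        =ᵐ[P] P[D.indicator (fun _ => (1 : ℝ)) | MeasurableSpace.comap Θ mΨ] :=
    fun hD => disint_ae_eq_condexp P Θ hΘ Pd hPdprob hPdmeas hPdint hPdcons hD
  constructor
  · intro h
    -- Step 1: each finite constraint holds a.e.
    have step1 : ∀ (n : ℕ) (idx : Fin n → I), Function.Injective idx →
        ∀ E : Fin n → Set Ω,
        (∀ j, MeasurableSet[MeasurableSpace.comap (X (idx j)) mY] (E j)) →
        ∀ᵐ θ ∂(P.map Θ), Pd θ (⋂ j, E j) = ∏ j, Pd θ (E j) := by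
      intro n idx hinj E hE
      have hmE : ∀ j, MeasurableSet (E j) := fun j => (hX _).comap_le _ (hE j)
      have hmI : MeasurableSet (⋂ j, E j) := MeasurableSet.iInter fun j => hmE j
      have h1 := h n idx hinj E hE
      have hae : (fun ω => (Pd (Θ ω) (⋂ j, E j)).toReal)
          =ᵐ[P] fun ω => ∏ j, (Pd (Θ ω) (E j)).toReal := by
        have h2 : (fun ω => ∏ j,
            (P[(E j).indicator (fun _ => (1 : ℝ)) | MeasurableSpace.comap Θ mΨ]) ω)
            =ᵐ[P] fun ω => ∏ j, (Pd (Θ ω) (E j)).toReal := by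
          filter_upwards [ae_all_iff.2 fun j => key (hmE j)] with ω hω
          exact Finset.prod_congr rfl fun j _ => (hω j).symm
        exact ((key hmI).trans h1).trans h2
      have haemap : ∀ᵐ θ ∂(P.map Θ),
          (Pd θ (⋂ j, E j)).toReal = ∏ j, (Pd θ (E j)).toReal := by
        refine (MeasureTheory.ae_map_iff hΘ.aemeasurable ?_).2 hae
        exact measurableSet_eq_fun (hPdmeas _ hmI).ennreal_toReal
          (Finset.measurable_prod _ fun j _ => (hPdmeas _ (hmE j)).ennreal_toReal)
      filter_upwards [haemap] with θ hθ
      haveI := hPdprob θ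
      rw [← ENNReal.toReal_prod] at hθ
      exact (ENNReal.toReal_eq_toReal_iff' (measure_ne_top _ _)
        (ENNReal.prod_lt_top fun j _ => measure_lt_top _ _).ne).1 hθ
    -- Step 2: countable π-systems
    set C : Set (Set Y) := MeasurableSpace.countableGeneratingSet Y with hC
    have hCc : C.Countable := MeasurableSpace.countable_countableGeneratingSet
    set π : I → Set (Set Ω) := fun i => generatePiSystem ((X i ⁻¹' ·) '' C) with hπ
    have hπc : ∀ i, (π i).Countable :=
      fun i => countable_generatePiSystem (hCc.image _)
    have hπne : ∀ i, (π i).Nonempty := fun i =>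
      ⟨_, subset_generatePiSystem_self _
        (mem_image_of_mem _ MeasurableSpace.empty_mem_countableGeneratingSet)⟩
    have hgen : ∀ i, MeasurableSpace.comap (X i) mY = MeasurableSpace.generateFrom (π i) := by
      intro i
      rw [hπ]
      conv_lhs => rw [← MeasurableSpace.generateFrom_countableGeneratingSet (α := Y)]
      rw [MeasurableSpace.comap_generateFrom, generateFrom_generatePiSystem_eq]
    have hπmeas : ∀ i, ∀ t ∈ π i, MeasurableSet[MeasurableSpace.comap (X i) mY] t := by
      intro i t ht
      rw [hgen i]
      exact MeasurableSpace.measurableSet_generateFrom ht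
    -- enumerate the π-systems
    have hex : ∀ i, ∃ f : ℕ → Set Ω, π i = Set.range f :=
      fun i => (hπc i).exists_eq_range (hπne i)
    choose seq hseq using hex
    -- countable family of constraints
    have hall : ∀ᵐ θ ∂(P.map Θ), ∀ (p : Σ n : ℕ, (Fin n → I) × (Fin n → ℕ)),
        Function.Injective p.2.1 →
        Pd θ (⋂ j, seq (p.2.1 j) (p.2.2 j)) = ∏ j, Pd θ (seq (p.2.1 j) (p.2.2 j)) := by
      rw [ae_all_iff]
      rintro ⟨n, idx, k⟩
      by_cases hinj : Function.Injective idx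
      · filter_upwards [step1 n idx hinj (fun j => seq (idx j) (k j))
          (fun j => hπmeas _ _ (by rw [hseq]; exact ⟨k j, rfl⟩))] with θ hθ
        exact fun _ => hθ
      · filter_upwards with θ hcon; exact absurd hcon hinj
    filter_upwards [hall] with θ hθ
    haveI := hPdprob θ
    rw [ProbabilityTheory.iIndepFun_iff_iIndep]
    refine ProbabilityTheory.iIndepSets.iIndep (fun i => (hX i).comap_le) π
      (fun i => isPiSystem_generatePiSystem _) hgen ?_
    rw [ProbabilityTheory.iIndepSets_iff]
    intro s f hf
    -- reindex over `Fin s.card`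
    set e : Fin s.card → I := fun m => ((s.equivFin.symm m : s) : I) with he
    have hinj : Function.Injective e :=
      Subtype.coe_injective.comp s.equivFin.symm.injective
    have hrange : Set.range e = (s : Set I) := by
      ext i
      constructor
      · rintro ⟨m, rfl⟩; exact (s.equivFin.symm m).2
      · intro hi; exact ⟨s.equivFin ⟨i, hi⟩, by simp [he]⟩
    have hchoose : ∀ m : Fin s.card, ∃ k : ℕ, seq (e m) k = f (e m) := by
      intro m
      have : f (e m) ∈ π (e m) := hf _ (s.equivFin.symm m).2
      rw [hseq] at this
      obtain ⟨k, hk⟩ := this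
      exact ⟨k, hk⟩
    choose k hk using hchoose
    have := hθ ⟨s.card, e, k⟩ hinj
    simp only [hk] at this
    have hIeq : (⋂ m, f (e m)) = ⋂ i ∈ s, f i := by
      rw [show (⋂ i ∈ s, f i) = ⋂ i ∈ (s : Set I), f i by simp, ← hrange,
        Set.biInter_range]
    have hPeq : (∏ m, Pd θ (f (e m))) = ∏ i ∈ s, Pd θ (f i) := by
      rw [← Finset.prod_coe_sort s (fun i => Pd θ (f i))]
      exact Fintype.prod_equiv s.equivFin.symm _ _ fun m => rfl
    rw [hIeq, hPeq] at this
    exact this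
  · intro h n idx hinj E hE
    have hmE : ∀ j, MeasurableSet (E j) := fun j => (hX _).comap_le _ (hE j)
    have hmI : MeasurableSet (⋂ j, E j) := MeasurableSet.iInter fun j => hmE j
    -- a.e. θ, the finite constraint holds
    have hstep : ∀ᵐ θ ∂(P.map Θ), Pd θ (⋂ j, E j) = ∏ j, Pd θ (E j) := by
      filter_upwards [h] with θ hθ
      set f' : I → Set Ω := Function.extend idx E (fun _ => Set.univ) with hf'
      have hf'eq : ∀ j, f' (idx j) = E j := fun j => hinj.extend_apply E _ j
      have hmeas' : ∀ i ∈ Finset.image idx Finset.univ,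
          MeasurableSet[MeasurableSpace.comap (X i) mY] (f' i) := by
        intro i hi
        obtain ⟨j, -, rfl⟩ := Finset.mem_image.1 hi
        rw [hf'eq j]; exact hE j
      have := ProbabilityTheory.iIndepFun.meas_biInter hθ hmeas'
      have hIeq : (⋂ i ∈ Finset.image idx Finset.univ, f' i) = ⋂ j, E j := by
        rw [show (⋂ i ∈ Finset.image idx Finset.univ, f' i)
            = ⋂ i ∈ (↑(Finset.image idx Finset.univ) : Set I), f' i by simp]
        rw [Finset.coe_image, Finset.coe_univ, Set.image_univ, Set.biInter_range]
        exact Set.iInter_congr hf'eq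
      have hPeq : (∏ i ∈ Finset.image idx Finset.univ, Pd θ (f' i))
          = ∏ j, Pd θ (E j) := by
        rw [Finset.prod_image (fun a _ b _ hab => hinj hab)]
        exact Finset.prod_congr rfl fun j _ => by rw [hf'eq j]
      rw [hIeq, hPeq] at this
      exact this
    -- transfer to `P`
    have hP : ∀ᵐ ω ∂P, Pd (Θ ω) (⋂ j, E j) = ∏ j, Pd (Θ ω) (E j) :=
      MeasureTheory.ae_of_ae_map hΘ.aemeasurable hstep
    have h1 : (fun ω => (Pd (Θ ω) (⋂ j, E j)).toReal)
        =ᵐ[P] fun ω => ∏ j, (Pd (Θ ω) (E j)).toReal := by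
      filter_upwards [hP] with ω hω
      rw [hω, ENNReal.toReal_prod]
    have h2 : (fun ω => ∏ j, (Pd (Θ ω) (E j)).toReal)
        =ᵐ[P] fun ω => ∏ j,
          (P[(E j).indicator (fun _ => (1 : ℝ)) | MeasurableSpace.comap Θ mΨ]) ω := by
      filter_upwards [ae_all_iff.2 fun j => key (hmE j)] with ω hω
      exact Finset.prod_congr rfl fun j _ => hω j
    exact ((key hmI).symm.trans h1).trans h2
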